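/- Let X be a normed space, G : X → ℝ ∪ {+∞} convex and proper, and H : X → ℝ Lipschitz continuous and convex. Then the infimal convolution G □ H is lower semicontinuous. -/

import Mathlib

open scoped NNReal

/-- Convexity for extended-real-valued functions. -/
def ERealConvexOn {X : Type*} [AddCommGroup X] [Module ℝ X] (F : X → EReal) : Prop :=
  ∀ x y : X, ∀ a b : ℝ, 0 ≤ a → 0 ≤ b → a + b = 1 →
    F (a • x + b • y) ≤ (a : EReal) * F x + (b : EReal) * F y

/-- If `G` is convex and proper and `H` is real-valued, convex, and Lipschitz,
then the infimal convolution `G □ H` is lower semicontinuous. -/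
theorem stmt1 {X : Type*} [NormedAddCommGroup X] [NormedSpace ℝ X]
    (G : X → EReal) (H : X → ℝ) (L : ℝ≥0)
    (hGc : ERealConvexOn G) (hGbot : ∀ x, G x ≠ ⊥) (hGprop : ∃ x, G x ≠ ⊤)
    (hHc : ConvexOn ℝ Set.univ H) (hHlip : LipschitzWith L H) :
    LowerSemicontinuous (fun x => ⨅ y : X, G y + ((H (x - y) : ℝ) : EReal)) := by
  set F : X → EReal := fun x => ⨅ y : X, G y + ((H (x - y) : ℝ) : EReal) with hF
  -- Key Lipschitz-type inequality for F
  have key : ∀ x z : X, F x ≤ F z + ((L * ‖x - z‖ : ℝ) : EReal) := by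
    intro x z
    rw [← EReal.sub_le_iff_le_add (Or.inl (EReal.coe_ne_bot _))
      (Or.inl (EReal.coe_ne_top _))]
    refine le_iInf fun w => ?_
    refine EReal.sub_le_of_le_add ?_
    have h1 : F x ≤ G w + ((H (x - w) : ℝ) : EReal) := iInf_le _ w
    have h2 : H (x - w) ≤ H (z - w) + L * ‖x - z‖ := by
      have hd := hHlip.dist_le_mul (x - w) (z - w)
      rw [dist_eq_norm, dist_eq_norm, sub_sub_sub_cancel_right] at hd
      have : H (x - w) - H (z - w) ≤ L * ‖x - z‖ :=
        (le_abs_self _).trans (by rwa [← Real.dist_eq])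
      linarith
    calc F x ≤ G w + ((H (x - w) : ℝ) : EReal) := h1
      _ ≤ G w + (((H (z - w) + L * ‖x - z‖ : ℝ)) : EReal) := by
          exact add_le_add le_rfl (EReal.coe_le_coe_iff.2 h2)
      _ = G w + ((H (z - w) : ℝ) : EReal) + ((L * ‖x - z‖ : ℝ) : EReal) := by
          rw [EReal.coe_add, add_assoc]
  intro x y hy
  obtain ⟨r, hyr, hrx⟩ := EReal.exists_between_coe_real hy
  obtain ⟨ε, hε, hεx⟩ : ∃ ε : ℝ, 0 < ε ∧ ((r + L * ε : ℝ) : EReal) ≤ F x := by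
    rcases eq_or_ne (F x) ⊤ with h | h
    · exact ⟨1, one_pos, h ▸ le_top⟩
    · have hb : F x ≠ ⊥ := fun h' => by simp [h'] at hrx
      obtain ⟨fr, hfr⟩ : ∃ fr : ℝ, F x = (fr : EReal) :=
        ⟨(F x).toReal, (EReal.coe_toReal h hb).symm⟩
      have hrfr : r < fr := by rwa [hfr, EReal.coe_lt_coe_iff] at hrx
      have hεpos : 0 < (fr - r) / ((L : ℝ) + 1) := div_pos (by linarith) (by positivity)
      refine ⟨(fr - r) / (L + 1), hεpos, ?_⟩
      rw [hfr, EReal.coe_le_coe_iff]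
      have hL : (L : ℝ) ≤ (L : ℝ) + 1 := by linarith
      have h1 : (L : ℝ) * ((fr - r) / (L + 1)) ≤ ((L : ℝ) + 1) * ((fr - r) / (L + 1)) := by
        exact mul_le_mul_of_nonneg_right hL hεpos.le
      have h2 : ((L : ℝ) + 1) * ((fr - r) / (L + 1)) = fr - r := by
        field_simp
      linarith
  have hball : ∀ᶠ z in nhds x, dist z x < ε :=
    Filter.eventually_of_mem (Metric.ball_mem_nhds x hε) fun z hz => hz
  filter_upwards [hball] with z hz
  have h1 : ((r + L * ε : ℝ) : EReal) ≤ F z + ((L * ε : ℝ) : EReal) := by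
    refine hεx.trans ((key x z).trans ?_)
    refine add_le_add le_rfl (EReal.coe_le_coe_iff.2 ?_)
    have : ‖x - z‖ < ε := by rwa [← dist_eq_norm, dist_comm] ; 
    exact mul_le_mul_of_nonneg_left this.le L.coe_nonneg
  have h2 : (r : EReal) ≤ F z :=
    (EReal.addLECancellable_coe (L * ε)).add_le_add_iff_right.1
      (show (r : EReal) + ((L * ε : ℝ) : EReal) ≤ F z + ((L * ε : ℝ) : EReal) by
        rw [← EReal.coe_add]; exact h1)
  exact hyr.trans_le h2
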